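/- In a smooth and decomposable probabilistic circuit, marginalizing a variable X_j commutes with the circuit structure: the marginal of the distribution computed at any node equals the distribution computed by the circuit in which every leaf with scope {j} is replaced by the constant function equal to its total mass (which is 1). -/

import Mathlib

open scoped Classical
noncomputable section

universe u

/-- A probabilistic circuit over variables indexed by `ι` with domains `X i`:
leaves compute univariate densities, sum nodes compute weighted sums of their children,
and product nodes compute products of their children. -/
inductive PC (ι : Type) (X : ι → Type u) : Type (u + 1) where
  | leaf (i : ι) (ψ : X i → ℝ) : PC ι X
  | sum (weights : List ℝ) (children : List (PC ι X)) : PC ι X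
  | prod (children : List (PC ι X)) : PC ι X

namespace PC

variable {ι : Type} {X : ι → Type u}

/-- The scope (set of variables) of a circuit node. -/
def scope [DecidableEq ι] : PC ι X → Finset ι
  | .leaf i _ => {i}
  | .sum _ cs => (cs.attach.map (fun c => scope c.1)).foldr (· ∪ ·) ∅
  | .prod cs => (cs.attach.map (fun c => scope c.1)).foldr (· ∪ ·) ∅
decreasing_by
  all_goals (have := List.sizeOf_lt_of_mem c.2; simp at *; omega)

/-- The (unnormalized) density computed by a circuit node. -/
def eval : PC ι X → (∀ i, X i) → ℝ
  | .leaf i ψ, x => ψ (x i)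
  | .sum ws cs, x =>
      (List.zipWith (fun w v => w * v) ws (cs.attach.map (fun c => eval c.1 x))).sum
  | .prod cs, x => (cs.attach.map (fun c => eval c.1 x)).prod
decreasing_by
  all_goals (have := List.sizeOf_lt_of_mem c.2; simp at *; omega)

/-- Smoothness: all children of every sum node have identical scope. -/
inductive Smooth [DecidableEq ι] : PC ι X → Prop
  | leaf (i : ι) (ψ : X i → ℝ) : Smooth (.leaf i ψ)
  | sum (ws : List ℝ) (cs : List (PC ι X))
      (h : ∀ c ∈ cs, Smooth c)
      (hsc : ∀ c ∈ cs, ∀ d ∈ cs, scope c = scope d) : Smooth (.sum ws cs)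
  | prod (cs : List (PC ι X)) (h : ∀ c ∈ cs, Smooth c) : Smooth (.prod cs)

/-- Decomposability: children of every product node have pairwise disjoint scopes. -/
inductive Decomposable [DecidableEq ι] : PC ι X → Prop
  | leaf (i : ι) (ψ : X i → ℝ) : Decomposable (.leaf i ψ)
  | sum (ws : List ℝ) (cs : List (PC ι X))
      (h : ∀ c ∈ cs, Decomposable c) : Decomposable (.sum ws cs)
  | prod (cs : List (PC ι X))
      (h : ∀ c ∈ cs, Decomposable c)
      (hdisj : List.Pairwise (fun c d => Disjoint (scope c) (scope d)) cs) :
      Decomposable (.prod cs)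

/-- Validity: leaves are probability mass functions with densities bounded above by `1`,
and sum nodes are convex combinations (nonnegative weights summing to `1`). -/
inductive Valid [∀ i, Fintype (X i)] : PC ι X → Prop
  | leaf (i : ι) (ψ : X i → ℝ)
      (hnonneg : ∀ v, 0 ≤ ψ v) (hbdd : ∀ v, ψ v ≤ 1)
      (hsum : ∑ v : X i, ψ v = 1) : Valid (.leaf i ψ)
  | sum (ws : List ℝ) (cs : List (PC ι X))
      (h : ∀ c ∈ cs, Valid c)
      (hw : ∀ w ∈ ws, 0 ≤ w)
      (hw1 : ws.sum = 1)
      (hlen : ws.length = cs.length) : Valid (.sum ws cs)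
  | prod (cs : List (PC ι X)) (h : ∀ c ∈ cs, Valid c) : Valid (.prod cs)


/-- Replace every leaf with scope `{j}` by the constant function equal to its total
mass. -/
def margLeaf [DecidableEq ι] [∀ i, Fintype (X i)] (j : ι) : PC ι X → PC ι X
  | .leaf i ψ => if i = j then .leaf i (fun _ => ∑ v : X i, ψ v) else .leaf i ψ
  | .sum ws cs => .sum ws (cs.attach.map (fun c => margLeaf j c.1))
  | .prod cs => .prod (cs.attach.map (fun c => margLeaf j c.1))
decreasing_by
  all_goals (have := List.sizeOf_lt_of_mem c.2; simp at *; omega)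

end PC

namespace PC
variable {ι : Type} {X : ι → Type u}

lemma mem_foldr_union {α : Type*} [DecidableEq ι] (l : List α) (f : α → Finset ι) (a : ι) :
    a ∈ (l.map f).foldr (· ∪ ·) ∅ ↔ ∃ c ∈ l, a ∈ f c := by
  induction l with
  | nil => simp
  | cons c l ih => simp [ih]

lemma scope_leaf [DecidableEq ι] (i : ι) (ψ : X i → ℝ) :
    scope (X := X) (.leaf i ψ) = {i} := by rw [scope]

lemma eval_leaf (i : ι) (ψ : X i → ℝ) (x : ∀ i, X i) :
    eval (.leaf i ψ) x = ψ (x i) := by rw [eval]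

lemma scope_sum [DecidableEq ι] (ws : List ℝ) (cs : List (PC ι X)) :
    scope (.sum ws cs) = (cs.map scope).foldr (· ∪ ·) ∅ := by
  rw [scope, List.attach_map_val]

lemma scope_prod [DecidableEq ι] (cs : List (PC ι X)) :
    scope (.prod cs) = (cs.map scope).foldr (· ∪ ·) ∅ := by
  rw [scope, List.attach_map_val]

lemma eval_sum (ws : List ℝ) (cs : List (PC ι X)) (x : ∀ i, X i) :
    eval (.sum ws cs) x
      = (List.zipWith (fun w v => w * v) ws (cs.map (fun c => eval c x))).sum := by
  rw [eval]
  exact congrArg _ (congrArg _ (List.attach_map_val (l := cs) (f := fun c => eval c x)))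

lemma eval_prod (cs : List (PC ι X)) (x : ∀ i, X i) :
    eval (.prod cs) x = (cs.map (fun c => eval c x)).prod := by
  rw [eval]
  exact congrArg _ (List.attach_map_val (l := cs) (f := fun c => eval c x))

lemma margLeaf_sum [DecidableEq ι] [∀ i, Fintype (X i)] (j : ι) (ws : List ℝ)
    (cs : List (PC ι X)) :
    margLeaf j (.sum ws cs) = .sum ws (cs.map (margLeaf j)) := by
  rw [margLeaf, List.attach_map_val]

lemma margLeaf_prod [DecidableEq ι] [∀ i, Fintype (X i)] (j : ι) (cs : List (PC ι X)) :
    margLeaf j (.prod cs) = .prod (cs.map (margLeaf j)) := by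
  rw [margLeaf, List.attach_map_val]

lemma eval_congr [DecidableEq ι] (c : PC ι X) (x y : ∀ i, X i)
    (h : ∀ i ∈ c.scope, x i = y i) : eval c x = eval c y := by
  match c with
  | .leaf i ψ =>
      rw [eval_leaf, eval_leaf, h i (by rw [scope_leaf]; exact Finset.mem_singleton_self i)]
  | .sum ws cs =>
      rw [eval_sum, eval_sum]
      refine congrArg _ (congrArg _ ?_)
      apply List.map_congr_left
      intro c hc
      exact eval_congr c x y (fun i hi => h i (by rw [scope_sum, mem_foldr_union]; exact ⟨c, hc, hi⟩))
  | .prod cs =>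
      rw [eval_prod, eval_prod]
      refine congrArg _ ?_
      apply List.map_congr_left
      intro c hc
      exact eval_congr c x y (fun i hi => h i (by rw [scope_prod, mem_foldr_union]; exact ⟨c, hc, hi⟩))
termination_by sizeOf c
decreasing_by
  all_goals
    (have := List.sizeOf_lt_of_mem hc
     simp only [PC.sum.sizeOf_spec, PC.prod.sizeOf_spec]
     omega)

lemma eval_margLeaf_of_not_mem [DecidableEq ι] [∀ i, Fintype (X i)] (j : ι)
    (c : PC ι X) (hj : j ∉ c.scope) (x : ∀ i, X i) :
    eval (margLeaf j c) x = eval c x := by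
  match c with
  | .leaf i ψ =>
      have : i ≠ j := by
        rw [scope_leaf] at hj
        exact fun h => hj (by simp [h])
      rw [margLeaf, if_neg this]
  | .sum ws cs =>
      rw [margLeaf_sum, eval_sum, eval_sum]
      refine congrArg _ (congrArg _ ?_)
      rw [List.map_map]
      apply List.map_congr_left
      intro c hc
      exact eval_margLeaf_of_not_mem j c
        (fun h => hj (by rw [scope_sum, mem_foldr_union]; exact ⟨c, hc, h⟩)) x
  | .prod cs =>
      rw [margLeaf_prod, eval_prod, eval_prod]
      refine congrArg _ ?_
      rw [List.map_map]
      apply List.map_congr_left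
      intro c hc
      exact eval_margLeaf_of_not_mem j c
        (fun h => hj (by rw [scope_prod, mem_foldr_union]; exact ⟨c, hc, h⟩)) x
termination_by sizeOf c
decreasing_by
  all_goals
    (have := List.sizeOf_lt_of_mem hc
     simp only [PC.sum.sizeOf_spec, PC.prod.sizeOf_spec]
     omega)

lemma eval_update_of_not_mem [DecidableEq ι] (j : ι) (c : PC ι X) (hj : j ∉ c.scope)
    (x : ∀ i, X i) (v : X j) : eval c (Function.update x j v) = eval c x := by
  apply eval_congr
  intro i hi
  exact Function.update_of_ne (fun h => hj (by rwa [h] at hi)) _ _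

end PC

namespace PC
variable {ι : Type} {X : ι → Type u}

lemma sum_zipWith_swap {α β : Type*} [Fintype β] (ws : List ℝ) (l : List α)
    (f : β → α → ℝ) (g : α → ℝ) (h : ∀ a ∈ l, ∑ v : β, f v a = g a) :
    ∑ v : β, (List.zipWith (fun w r => w * r) ws (l.map (f v))).sum
      = (List.zipWith (fun w r => w * r) ws (l.map g)).sum := by
  induction ws generalizing l with
  | nil => simp
  | cons w ws ih =>
    cases l with
    | nil => simp
    | cons a l =>
      simp only [List.map_cons, List.zipWith_cons_cons, List.sum_cons]
      rw [Finset.sum_add_distrib, ← Finset.mul_sum, h a (by simp),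
        ih l (fun a ha => h a (by simp [ha]))]

lemma sum_prod_marg [DecidableEq ι] [∀ i, Fintype (X i)] (j : ι) (x : ∀ i, X i)
    (cs : List (PC ι X))
    (hdisj : List.Pairwise (fun c d => Disjoint (scope c) (scope d)) cs)
    (hj : ∃ c ∈ cs, j ∈ scope c)
    (IH : ∀ c ∈ cs, j ∈ c.scope →
      ∑ v : X j, eval c (Function.update x j v) = eval (margLeaf j c) x) :
    ∑ v : X j, (cs.map (fun c => eval c (Function.update x j v))).prod
      = (cs.map (fun c => eval (margLeaf j c) x)).prod := by
  induction cs with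
  | nil => simp at hj
  | cons c cs ih =>
    rw [List.pairwise_cons] at hdisj
    simp only [List.map_cons, List.prod_cons]
    by_cases hcj : j ∈ scope c
    · have hrest : ∀ d ∈ cs, j ∉ scope d := fun d hd =>
        Finset.disjoint_left.mp (hdisj.1 d hd) hcj
      have h1 : ∀ v, (cs.map (fun d => eval d (Function.update x j v))).prod
          = (cs.map (fun d => eval d x)).prod := by
        intro v
        refine congrArg _ (List.map_congr_left fun d hd => ?_)
        exact eval_update_of_not_mem j d (hrest d hd) x v
      have h2 : (cs.map (fun d => eval (margLeaf j d) x)).prod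
          = (cs.map (fun d => eval d x)).prod := by
        refine congrArg _ (List.map_congr_left fun d hd => ?_)
        exact eval_margLeaf_of_not_mem j d (hrest d hd) x
      calc ∑ v : X j, eval c (Function.update x j v)
              * (cs.map (fun d => eval d (Function.update x j v))).prod
          = ∑ v : X j, eval c (Function.update x j v)
              * (cs.map (fun d => eval d x)).prod := by
            exact Finset.sum_congr rfl fun v _ => by rw [h1 v]
        _ = (∑ v : X j, eval c (Function.update x j v))
              * (cs.map (fun d => eval d x)).prod := by rw [Finset.sum_mul]
        _ = eval (margLeaf j c) x * (cs.map (fun d => eval (margLeaf j d) x)).prod := by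
            rw [IH c (by simp) hcj, h2]
    · have hj' : ∃ d ∈ cs, j ∈ scope d := by
        rcases hj with ⟨d, hd, hjd⟩
        rcases List.mem_cons.mp hd with h | h
        · exact absurd (h ▸ hjd) hcj
        · exact ⟨d, h, hjd⟩
      have hcx : ∀ v, eval c (Function.update x j v) = eval c x :=
        fun v => eval_update_of_not_mem j c hcj x v
      have hcm : eval (margLeaf j c) x = eval c x :=
        eval_margLeaf_of_not_mem j c hcj x
      calc ∑ v : X j, eval c (Function.update x j v)
              * (cs.map (fun d => eval d (Function.update x j v))).prod
          = eval c x * ∑ v : X j,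
              (cs.map (fun d => eval d (Function.update x j v))).prod := by
            rw [Finset.mul_sum]
            exact Finset.sum_congr rfl fun v _ => by rw [hcx v]
        _ = eval c x * (cs.map (fun d => eval (margLeaf j d) x)).prod := by
            rw [ih hdisj.2 hj' (fun d hd hjd => IH d (by simp [hd]) hjd)]
        _ = eval (margLeaf j c) x * (cs.map (fun d => eval (margLeaf j d) x)).prod := by
            rw [hcm]

end PC

/-- In a smooth and decomposable probabilistic circuit, marginalizing out a variable
`X_j` (in the scope of the circuit) commutes with the circuit structure: the marginal of
the distribution computed at a node equals the distribution computed by the circuit in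
which every leaf with scope `{j}` is replaced by the constant function equal to its total
mass (which is `1` for normalized leaves). -/
theorem PC.marginalize_commutes
    {ι : Type} [Fintype ι] [DecidableEq ι] {X : ι → Type u}
    [∀ i, Fintype (X i)]
    (c : PC ι X) (hs : c.Smooth) (hd : c.Decomposable)
    (j : ι) (hj : j ∈ c.scope) (x : ∀ i, X i) :
    ∑ v : X j, c.eval (Function.update x j v) = (c.margLeaf j).eval x := by
  match c, hs, hd with
  | .leaf i ψ, _, _ =>
    rw [scope_leaf, Finset.mem_singleton] at hj
    subst hj
    rw [margLeaf, if_pos rfl, eval_leaf]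
    exact Finset.sum_congr rfl fun v _ => by rw [eval_leaf, Function.update_self]
  | .sum ws cs, .sum _ _ hsm hsc, .sum _ _ hdc =>
    rw [margLeaf_sum, eval_sum, List.map_map]
    rw [scope_sum, mem_foldr_union] at hj
    obtain ⟨c0, hc0, hj0⟩ := hj
    have hmem : ∀ c ∈ cs, j ∈ c.scope := fun c hc => (hsc c hc c0 hc0) ▸ hj0
    have := sum_zipWith_swap (β := X j) ws cs
      (fun v c => eval c (Function.update x j v))
      (fun c => eval (margLeaf j c) x)
      (fun c hc => PC.marginalize_commutes c (hsm c hc) (hdc c hc) j (hmem c hc) x)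
    simp only [Function.comp_def]
    rw [← this]
    exact Finset.sum_congr rfl fun v _ => by rw [eval_sum]
  | .prod cs, .prod _ hsm, .prod _ hdc hdisj =>
    rw [margLeaf_prod, eval_prod, List.map_map]
    rw [scope_prod, mem_foldr_union] at hj
    have := sum_prod_marg j x cs hdisj hj
      (fun c hc hjc => PC.marginalize_commutes c (hsm c hc) (hdc c hc) j hjc x)
    simp only [Function.comp_def]
    rw [← this]
    exact Finset.sum_congr rfl fun v _ => by rw [eval_prod]
termination_by sizeOf c
decreasing_by
  all_goals
    (have := List.sizeOf_lt_of_mem hc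
     simp only [PC.sum.sizeOf_spec, PC.prod.sizeOf_spec]
     omega)
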